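/- (Description of the norm group in the unramified case, used in Lemme 1) Let p be an odd prime and let u ∈ ℤ_p be a unit whose residue in ZMod p (via the reduction map ℤ_p → ZMod p) is not a square. Then for every nonzero z ∈ ℚ_p, there exist x, y ∈ ℚ_p with x² − u·y² = z if and only if the normalized p-adic valuation of z is even. -/

import Mathlib

open PadicInt Polynomial

section Aux

variable {p : ℕ} [Fact p.Prime]

lemma toZMod_eq_zero_iff' (x : ℤ_[p]) : PadicInt.toZMod x = 0 ↔ ‖x‖ < 1 := by
  rw [← PadicInt.not_isUnit_iff, ← mem_nonunits_iff, ← IsLocalRing.mem_maximalIdeal,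
    ← PadicInt.ker_toZMod, RingHom.mem_ker]

lemma norm_one_of_toZMod_ne_zero {x : ℤ_[p]} (h : PadicInt.toZMod x ≠ 0) : ‖x‖ = 1 := by
  have h1 := (toZMod_eq_zero_iff' x).not.mp h
  have := PadicInt.norm_le_one x
  push_neg at h1
  linarith

lemma val_p_zpow (k : ℤ) : ((p : ℚ_[p]) ^ k).valuation = k := by
  have hp1 : (1:ℝ) < p := by exact_mod_cast (Fact.out : p.Prime).one_lt
  have hne : ((p : ℚ_[p]) ^ k) ≠ 0 := zpow_ne_zero _ (by exact_mod_cast (Fact.out : p.Prime).ne_zero)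
  have h := Padic.norm_eq_zpow_neg_valuation hne
  rw [Padic.norm_p_zpow] at h
  have := (zpow_right_inj₀ (by linarith : (0:ℝ) < p) (by linarith)).mp h.symm
  omega

/-- square lifting -/
lemma exists_sq_eq_of_residue_sq {c : ℤ_[p]} (hp : p ≠ 2) (hc0 : PadicInt.toZMod c ≠ 0)
    (hcs : IsSquare (PadicInt.toZMod c)) : ∃ x : ℤ_[p], x ^ 2 = c := by
  obtain ⟨r, hr⟩ := hcs
  have hr0 : r ≠ 0 := by rintro rfl; simp at hr; exact hc0 hr
  set a : ℤ_[p] := ((r.val : ℕ) : ℤ_[p]) with ha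
  have haz : PadicInt.toZMod a = r := by
    rw [ha, map_natCast, ZMod.natCast_val, ZMod.cast_id]
  have ha1 : ‖a‖ = 1 := norm_one_of_toZMod_ne_zero (by rw [haz]; exact hr0)
  set F : Polynomial ℤ_[p] := X ^ 2 - C c with hF
  have heval : ∀ z : ℤ_[p], F.eval z = z ^ 2 - c := by intro z; simp [hF]
  have hderiv : ∀ z : ℤ_[p], F.derivative.eval z = 2 * z := by
    intro z; simp [hF]; exact Or.inl one_add_one_eq_two
  have h2 : ‖(2 : ℤ_[p])‖ = 1 := by
    apply norm_one_of_toZMod_ne_zero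
    have h2' : ((2 : ℕ) : ZMod p) ≠ 0 := by
      rw [Ne, ZMod.natCast_eq_zero_iff]
      intro h
      exact hp ((Nat.prime_dvd_prime_iff_eq Fact.out Nat.prime_two).mp h)
    rw [map_ofNat]
    exact_mod_cast h2'
  have hlt : ‖F.eval a‖ < ‖F.derivative.eval a‖ ^ 2 := by
    rw [heval, hderiv, _root_.norm_mul, h2, ha1]
    have : ‖a ^ 2 - c‖ < 1 := by
      rw [← toZMod_eq_zero_iff']
      simp [haz, ← hr, sq]
    calc ‖a ^ 2 - c‖ < 1 := this
      _ = (1 * 1) ^ 2 := by norm_num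
  obtain ⟨z, hz, -, -, -⟩ := hensels_lemma hlt
  exact ⟨z, by rw [coe_aeval_eq_eval, heval] at hz; exact sub_eq_zero.mp hz⟩

lemma norm_form_eq_one {u : ℤ_[p]} (hu : IsUnit u) (hns : ¬ IsSquare (PadicInt.toZMod u))
    {x y : ℤ_[p]} (h : ‖x‖ = 1 ∨ ‖y‖ = 1) : ‖x ^ 2 - u * y ^ 2‖ = 1 := by
  apply norm_one_of_toZMod_ne_zero
  intro h0
  rw [map_sub, map_mul, map_pow, map_pow] at h0
  set X := PadicInt.toZMod x
  set Y := PadicInt.toZMod y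
  have h0' : X ^ 2 = PadicInt.toZMod u * Y ^ 2 := by linear_combination h0
  by_cases hY : Y = 0
  · have hX : X = 0 := by
      have := h0'
      rw [hY] at this
      simpa [pow_eq_zero_iff] using this
    have hx1 : ‖x‖ < 1 := (toZMod_eq_zero_iff' x).mp hX
    have hy1 : ‖y‖ < 1 := (toZMod_eq_zero_iff' y).mp hY
    rcases h with h | h <;> linarith
  · refine hns ⟨X * Y⁻¹, ?_⟩
    have hY2 : Y ^ 2 ≠ 0 := pow_ne_zero 2 hY
    have : X * Y⁻¹ * (X * Y⁻¹) = X ^ 2 / Y ^ 2 := by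
      rw [div_eq_mul_inv, sq, sq, _root_.mul_inv]; ring
    rw [this, h0', mul_div_assoc, div_self hY2, mul_one]

lemma exists_form_eq_unit (hp : p ≠ 2) {u : ℤ_[p]} (hu : IsUnit u)
    {w : ℤ_[p]} (hw : ‖w‖ = 1) : ∃ x y : ℤ_[p], x ^ 2 - u * y ^ 2 = w := by
  have hpodd : Fintype.card (ZMod p) % 2 = 1 := by
    rw [ZMod.card]
    exact Nat.odd_iff.mp ((Fact.out : p.Prime).odd_of_ne_two hp)
  have hune : PadicInt.toZMod u ≠ 0 := (hu.map PadicInt.toZMod).ne_zero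
  have hwne : PadicInt.toZMod w ≠ 0 := by
    rw [Ne, toZMod_eq_zero_iff', hw]; exact lt_irrefl 1
  obtain ⟨a, b, hab⟩ := FiniteField.exists_root_sum_quadratic
    (f := X ^ 2 - C (PadicInt.toZMod w)) (g := C (-(PadicInt.toZMod u)) * X ^ 2)
    (by rw [degree_X_pow_sub_C (by norm_num) _]; rfl)
    (by rw [degree_C_mul_X_pow _ (neg_ne_zero.mpr hune)]; rfl) hpodd
  simp only [eval_mul, eval_sub, eval_pow, eval_X, eval_C] at hab
  -- hab : (a^2 - w̄) + (-ū * b^2) = 0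
  have hab' : a ^ 2 = PadicInt.toZMod u * b ^ 2 + PadicInt.toZMod w := by linear_combination hab
  by_cases ha : a = 0
  · -- use x = 0
    have hb : b ≠ 0 := by
      intro hb; rw [ha, hb] at hab'; simp at hab'; exact hwne hab'.symm
    set c : ℤ_[p] := -(↑hu.unit⁻¹ * w) with hc
    have huinv : PadicInt.toZMod u * PadicInt.toZMod (↑hu.unit⁻¹ : ℤ_[p]) = 1 := by
      rw [← map_mul, IsUnit.mul_val_inv, map_one]
    have hcz : PadicInt.toZMod c = b ^ 2 := by
      have hw' : PadicInt.toZMod w = -(PadicInt.toZMod u * b ^ 2) := by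
        rw [ha] at hab'; linear_combination -hab'
      rw [hc, map_neg, map_mul, hw']
      linear_combination b ^ 2 * huinv
    obtain ⟨y, hy⟩ := exists_sq_eq_of_residue_sq hp
      (by rw [hcz]; exact pow_ne_zero 2 hb) ⟨b, by rw [hcz, sq]⟩
    refine ⟨0, y, ?_⟩
    have : u * c = -w := by
      rw [hc]
      have : u * ↑hu.unit⁻¹ = 1 := IsUnit.mul_val_inv hu
      rw [mul_neg, ← mul_assoc, this, one_mul]
    rw [hy]
    rw [this]; ring
  · set c : ℤ_[p] := u * ((b.val : ℕ) : ℤ_[p]) ^ 2 + w with hc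
    have hbz : PadicInt.toZMod (((b.val : ℕ) : ℤ_[p])) = b := by
      rw [map_natCast, ZMod.natCast_val, ZMod.cast_id]
    have hcz : PadicInt.toZMod c = a ^ 2 := by
      rw [hc, map_add, map_mul, map_pow, hbz, hab']
    obtain ⟨x, hx⟩ := exists_sq_eq_of_residue_sq hp
      (by rw [hcz]; exact pow_ne_zero 2 ha) ⟨a, by rw [hcz, sq]⟩
    exact ⟨x, ((b.val : ℕ) : ℤ_[p]), by rw [hx, hc]; ring⟩

lemma val_zero_of_norm_one {q : ℚ_[p]} (h : ‖q‖ = 1) : q.valuation = 0 := by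
  have hq : q ≠ 0 := by intro h0; rw [h0, norm_zero] at h; norm_num at h
  have := Padic.norm_eq_zpow_neg_valuation hq
  rw [h] at this
  have hp1 : (1:ℝ) < p := by exact_mod_cast (Fact.out : p.Prime).one_lt
  have := (zpow_right_inj₀ (by linarith : (0:ℝ) < p) (by linarith)).mp
    (by rw [← this]; norm_num : (p:ℝ) ^ (0:ℤ) = (p:ℝ) ^ (-q.valuation))
  omega

end Aux

/-- (Norm group in the unramified case, used in Lemme 1) If `u` is a unit of `ℤ_p`
(p odd) whose residue in `ZMod p` is a non-square, then a nonzero `z ∈ ℚ_p` is of the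
form `x² − u·y²` if and only if its normalized valuation is even. -/
theorem norm_iff_even_valuation_unramified (p : ℕ) [Fact p.Prime] (hp : p ≠ 2)
    (u : ℤ_[p]) (hu : IsUnit u) (hns : ¬ IsSquare (PadicInt.toZMod u))
    (z : ℚ_[p]) (hz : z ≠ 0) :
    (∃ x y : ℚ_[p], x ^ 2 - u * y ^ 2 = z) ↔ Even z.valuation := by
  have hp0 : (p : ℝ) ≠ 0 := by exact_mod_cast (Fact.out : p.Prime).ne_zero
  have hpq0 : (p : ℚ_[p]) ≠ 0 := by exact_mod_cast (Fact.out : p.Prime).ne_zero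
  constructor
  · rintro ⟨x, y, hxy⟩
    classical
    set n : ℤ := if x = 0 then y.valuation else if y = 0 then x.valuation
      else min x.valuation y.valuation with hn
    have hnorm : ∀ t : ℚ_[p], t ≠ 0 → n ≤ t.valuation →
        ‖t * (p : ℚ_[p]) ^ (-n)‖ ≤ 1 ∧ (n = t.valuation → ‖t * (p : ℚ_[p]) ^ (-n)‖ = 1) := by
      intro t ht hle
      rw [_root_.norm_mul, Padic.norm_eq_zpow_neg_valuation ht, Padic.norm_p_zpow, neg_neg,
        ← zpow_add₀ hp0]
      constructor
      · apply zpow_le_one_of_nonpos₀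
        · exact_mod_cast (Fact.out : p.Prime).one_le
        · omega
      · intro he; rw [← he]; norm_num
    have key : ∃ (X Y : ℤ_[p]), (‖X‖ = 1 ∨ ‖Y‖ = 1) ∧
        (X : ℚ_[p]) = x * (p : ℚ_[p]) ^ (-n) ∧ (Y : ℚ_[p]) = y * (p : ℚ_[p]) ^ (-n) := by
      by_cases hx0 : x = 0
      · have hy0 : y ≠ 0 := by
          intro hy0; apply hz; rw [← hxy, hx0, hy0]; ring
        have hn' : n = y.valuation := by rw [hn, if_pos hx0]
        obtain ⟨hle, heq⟩ := hnorm y hy0 (le_of_eq hn')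
        exact ⟨⟨0, by norm_num⟩, ⟨_, hle⟩, Or.inr (heq hn'), by simp [hx0], rfl⟩
      · by_cases hy0 : y = 0
        · have hn' : n = x.valuation := by rw [hn, if_neg hx0, if_pos hy0]
          obtain ⟨hle, heq⟩ := hnorm x hx0 (le_of_eq hn')
          exact ⟨⟨_, hle⟩, ⟨0, by norm_num⟩, Or.inl (heq hn'), rfl, by simp [hy0]⟩
        · have hn' : n = min x.valuation y.valuation := by rw [hn, if_neg hx0, if_neg hy0]
          obtain ⟨hlex, heqx⟩ := hnorm x hx0 (by omega)
          obtain ⟨hley, heqy⟩ := hnorm y hy0 (by omega)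
          refine ⟨⟨_, hlex⟩, ⟨_, hley⟩, ?_, rfl, rfl⟩
          rcases min_choice x.valuation y.valuation with h | h
          · exact Or.inl (heqx (by omega))
          · exact Or.inr (heqy (by omega))
    obtain ⟨X, Y, hXY, hXc, hYc⟩ := key
    have hform := norm_form_eq_one hu hns hXY
    have hWz : ((X ^ 2 - u * Y ^ 2 : ℤ_[p]) : ℚ_[p]) = z * (p : ℚ_[p]) ^ (-(2 * n)) := by
      push_cast
      rw [hXc, hYc, ← hxy]
      have hpp : ((p : ℚ_[p]) ^ (-n)) ^ (2 : ℕ) = (p : ℚ_[p]) ^ (-(2 * n)) := by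
        rw [← zpow_natCast ((p : ℚ_[p]) ^ (-n)) 2, ← zpow_mul]
        congr 1
        push_cast
        ring
      rw [mul_pow, mul_pow, hpp]
      ring
    have hzeq : z = (p : ℚ_[p]) ^ (2 * n) * ((X ^ 2 - u * Y ^ 2 : ℤ_[p]) : ℚ_[p]) := by
      rw [hWz, ← mul_assoc, mul_comm ((p : ℚ_[p]) ^ (2 * n)) z, mul_assoc,
        ← zpow_add₀ hpq0, (by ring : 2 * n + -(2 * n) = 0), zpow_zero, mul_one]
    have hWne : ((X ^ 2 - u * Y ^ 2 : ℤ_[p]) : ℚ_[p]) ≠ 0 := by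
      rw [Ne, ← norm_eq_zero]
      rw [PadicInt.padic_norm_e_of_padicInt, hform]
      norm_num
    rw [hzeq, Padic.valuation_mul (zpow_ne_zero _ hpq0) hWne, val_p_zpow,
      val_zero_of_norm_one (by rw [PadicInt.padic_norm_e_of_padicInt, hform])]
    exact ⟨n, by ring⟩
  · rintro ⟨n, hval⟩
    set w : ℚ_[p] := z * (p : ℚ_[p]) ^ (-(2 * n)) with hw
    have hwnorm : ‖w‖ = 1 := by
      rw [hw, _root_.norm_mul, Padic.norm_eq_zpow_neg_valuation hz, Padic.norm_p_zpow, neg_neg,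
        ← zpow_add₀ hp0, hval, (by ring : -(n + n) + 2 * n = 0), zpow_zero]
    set W : ℤ_[p] := ⟨w, le_of_eq hwnorm⟩ with hW
    have hWnorm : ‖W‖ = 1 := hwnorm
    obtain ⟨x, y, hxy⟩ := exists_form_eq_unit hp hu hWnorm
    refine ⟨(p : ℚ_[p]) ^ n * (x : ℚ_[p]), (p : ℚ_[p]) ^ n * (y : ℚ_[p]), ?_⟩
    have hcast : ((x ^ 2 - u * y ^ 2 : ℤ_[p]) : ℚ_[p]) = w := by rw [hxy]
    push_cast at hcast
    calc ((p : ℚ_[p]) ^ n * x) ^ 2 - u * ((p : ℚ_[p]) ^ n * y) ^ 2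
        = (p : ℚ_[p]) ^ n * (p : ℚ_[p]) ^ n * ((x : ℚ_[p]) ^ 2 - u * (y : ℚ_[p]) ^ 2) := by ring
      _ = (p : ℚ_[p]) ^ n * (p : ℚ_[p]) ^ n * (z * (p : ℚ_[p]) ^ (-(2 * n))) := by rw [hcast]
      _ = z * ((p : ℚ_[p]) ^ n * (p : ℚ_[p]) ^ n * (p : ℚ_[p]) ^ (-(2 * n))) := by ring
      _ = z := by
          rw [← zpow_add₀ hpq0, ← zpow_add₀ hpq0, (by ring : n + n + -(2*n) = 0), zpow_zero,
            mul_one]
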